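/- Let ω, Υ, Q be C³ (respectively C¹ for Q) real-valued functions on a neighborhood of 0 in ℝ satisfying the radial eikonal equation 2r·Υ'(r) + r²·(Υ'(r)² + Q(r)) = e^{2(ω(r) − Υ(r))} − 1 for all r near 0. Write ω₀ = ω(0), ω₁ = ω'(0), ω₂ = ω''(0), q = Q(0). Let b be defined near 0 by inverting r̂ = e^{Υ(r)}·r as r = r̂·b(r̂) (with b(0) := e^{−Υ(0)}). Then b is C² near 0 with b(0) = e^{−ω₀}, b'(0) = −(1/2)·ω₁·e^{−2ω₀}, and b''(0) = ((2/3)·ω₁² + (1/3)·q − (1/3)·ω₂)·e^{−3ω₀}. Equivalently, b(r̂) = e^{−ω}[1 − (1/2)ω_r e^{−ω} r̂ + ((1/3)ω_r² + (1/6)|∇ω|² − (1/6)ω_{rr})e^{−2ω} r̂²] + O(r̂³). -/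

import Mathlib

open Filter Topology

private lemma sq_mul_hasDerivAt {G : ℝ → ℝ} (hG : ContinuousAt G 0) :
    HasDerivAt (fun r => r ^ 2 * G r) 0 0 := by
  rw [hasDerivAt_iff_tendsto_slope]
  have h1 : Tendsto (fun x : ℝ => x * G x) (𝓝[≠] (0:ℝ)) (𝓝 0) := by
    have h2 : Tendsto (fun x : ℝ => x * G x) (𝓝 (0:ℝ)) (𝓝 (0 * G 0)) :=
      (continuousAt_id.mul hG)
    simpa using h2.mono_left nhdsWithin_le_nhds
  refine h1.congr' ?_
  filter_upwards [self_mem_nhdsWithin] with x hx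
  have hx' : (x : ℝ) ≠ 0 := hx
  simp only [slope_def_field]
  field_simp
  ring

/-- if `ω, Υ, Q` satisfy the radial eikonal equation
`2rΥ' + r²(Υ'² + Q) = e^{2(ω − Υ)} − 1` near 0 and `b` is obtained by inverting
`r̂ = e^{Υ(r)} r` as `r = r̂·b(r̂)`, then `b` is C² near 0 with `b(0) = e^{−ω₀}`,
`b'(0) = −½ω₁e^{−2ω₀}` and `b''(0) = (⅔ω₁² + ⅓q − ⅓ω₂)e^{−3ω₀}`, where
`ω₀ = ω(0)`, `ω₁ = ω'(0)`, `ω₂ = ω''(0)`, `q = Q(0)`. -/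
theorem stmt8 (ω Υ Q : ℝ → ℝ) (U : Set ℝ) (hUo : IsOpen U) (hU0 : (0 : ℝ) ∈ U)
    (hω : ContDiffOn ℝ 3 ω U) (hΥ : ContDiffOn ℝ 3 Υ U) (hQ : ContDiffOn ℝ 1 Q U)
    (heq : ∀ r ∈ U, 2 * r * deriv Υ r + r ^ 2 * ((deriv Υ r) ^ 2 + Q r)
      = Real.exp (2 * (ω r - Υ r)) - 1)
    (f : ℝ → ℝ) (hf : f = fun r => Real.exp (Υ r) * r)
    (g : ℝ → ℝ) (V : Set ℝ) (hVo : IsOpen V) (hV0 : (0 : ℝ) ∈ V)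
    (hfg : ∀ s ∈ V, f (g s) = s) (hgf : ∀ r ∈ V, g (f r) = r) (hg0 : g 0 = 0)
    (b : ℝ → ℝ) (hb : b = fun s => if s = 0 then Real.exp (-Υ 0) else g s / s) :
    ∃ V' : Set ℝ, IsOpen V' ∧ (0 : ℝ) ∈ V' ∧ ContDiffOn ℝ 2 b V' ∧
      b 0 = Real.exp (-ω 0) ∧
      deriv b 0 = -(1 / 2) * deriv ω 0 * Real.exp (-2 * ω 0) ∧
      deriv (deriv b) 0
        = ((2 / 3) * (deriv ω 0) ^ 2 + (1 / 3) * Q 0 - (1 / 3) * deriv (deriv ω) 0)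
          * Real.exp (-3 * ω 0) := by
  have hUnhds : U ∈ 𝓝 (0:ℝ) := hUo.mem_nhds hU0
  -- derived smoothness
  have hΥ1 : ContDiffOn ℝ 2 (deriv Υ) U := hΥ.deriv_of_isOpen hUo (by norm_num)
  have hΥ2 : ContDiffOn ℝ 1 (deriv (deriv Υ)) U := hΥ1.deriv_of_isOpen hUo (by norm_num)
  have hω1 : ContDiffOn ℝ 2 (deriv ω) U := hω.deriv_of_isOpen hUo (by norm_num)
  have hω2 : ContDiffOn ℝ 1 (deriv (deriv ω)) U := hω1.deriv_of_isOpen hUo (by norm_num)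
  have hasD : ∀ (F : ℝ → ℝ), ContDiffOn ℝ 1 F U → ∀ r ∈ U, HasDerivAt F (deriv F r) r :=
    fun F hF r hr => ((hF.contDiffAt (hUo.mem_nhds hr)).differentiableAt one_ne_zero).hasDerivAt
  have hdΥ : ∀ r ∈ U, HasDerivAt Υ (deriv Υ r) r := hasD Υ (hΥ.of_le (by norm_num))
  have hdΥ' : ∀ r ∈ U, HasDerivAt (deriv Υ) (deriv (deriv Υ) r) r :=
    hasD _ (hΥ1.of_le (by norm_num))
  have hdΥ'' : ∀ r ∈ U, HasDerivAt (deriv (deriv Υ)) (deriv (deriv (deriv Υ)) r) r :=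
    hasD _ hΥ2
  have hdω : ∀ r ∈ U, HasDerivAt ω (deriv ω r) r := hasD ω (hω.of_le (by norm_num))
  have hdω' : ∀ r ∈ U, HasDerivAt (deriv ω) (deriv (deriv ω) r) r :=
    hasD _ (hω1.of_le (by norm_num))
  have hdQ : ∀ r ∈ U, HasDerivAt Q (deriv Q r) r := hasD Q hQ
  -- Step A : Υ 0 = ω 0
  have hΥω : Υ 0 = ω 0 := by
    have h00 := heq 0 hU0
    simp only [mul_zero, zero_mul, ne_eq, OfNat.ofNat_ne_zero, not_false_eq_true, zero_pow,
      add_zero, zero_add] at h00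
    have h1 : Real.exp (2 * (ω 0 - Υ 0)) = 1 := by linarith
    have h2 : 2 * (ω 0 - Υ 0) = 0 := by
      have := congrArg Real.log h1
      simpa using this
    linarith
  -- Step B : first derivative identity on U
  have key1 : ∀ r ∈ U,
      2 * deriv Υ r + (2 * deriv (deriv Υ) r * r + 2 * deriv Υ r * 1) - 2 * deriv Υ r
        + ((2 * r) * ((deriv Υ r) ^ 2 + Q r)
          + r ^ 2 * (2 * deriv Υ r ^ 1 * deriv (deriv Υ) r + deriv Q r))
      = Real.exp (2 * (ω r - Υ r)) * (2 * (deriv ω r - deriv Υ r)) := by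
    intro r hr
    have hL : HasDerivAt (fun r => 2 * r * deriv Υ r + r ^ 2 * ((deriv Υ r) ^ 2 + Q r))
        (2 * deriv Υ r + (2 * deriv (deriv Υ) r * r + 2 * deriv Υ r * 1) - 2 * deriv Υ r
          + ((2 * r) * ((deriv Υ r) ^ 2 + Q r)
            + r ^ 2 * (2 * deriv Υ r ^ 1 * deriv (deriv Υ) r + deriv Q r))) r := by
      have h1 : HasDerivAt (fun r : ℝ => 2 * r * deriv Υ r)
          (2 * deriv Υ r + (2 * deriv (deriv Υ) r * r + 2 * deriv Υ r * 1) - 2 * deriv Υ r) r := by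
        have h2 : HasDerivAt (fun r : ℝ => 2 * r) 2 r := by
          simpa using (hasDerivAt_id r).const_mul 2
        have := h2.fun_mul (hdΥ' r hr)
        -- this : deriv = 2 * deriv Υ r + 2 * r * deriv (deriv Υ) r
        refine this.congr_deriv ?_
        ring
      have h3 : HasDerivAt (fun r => r ^ 2 * ((deriv Υ r) ^ 2 + Q r))
          ((2 * r) * ((deriv Υ r) ^ 2 + Q r)
            + r ^ 2 * (2 * deriv Υ r ^ 1 * deriv (deriv Υ) r + deriv Q r)) r := by
        have h4 : HasDerivAt (fun r : ℝ => r ^ 2) (2 * r) r := by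
          simpa using hasDerivAt_pow 2 r
        exact h4.mul (((hdΥ' r hr).pow 2).add (hdQ r hr))
      exact h1.add h3
    have hR : HasDerivAt (fun r => Real.exp (2 * (ω r - Υ r)) - 1)
        (Real.exp (2 * (ω r - Υ r)) * (2 * (deriv ω r - deriv Υ r))) r := by
      have hin : HasDerivAt (fun r => 2 * (ω r - Υ r)) (2 * (deriv ω r - deriv Υ r)) r :=
        ((hdω r hr).sub (hdΥ r hr)).const_mul 2
      exact ((Real.hasDerivAt_exp _).comp r hin).sub_const 1
    have hEq : (fun r => 2 * r * deriv Υ r + r ^ 2 * ((deriv Υ r) ^ 2 + Q r))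
        =ᶠ[𝓝 r] (fun r => Real.exp (2 * (ω r - Υ r)) - 1) :=
      eventually_of_mem (hUo.mem_nhds hr) (fun x hx => heq x hx)
    have h := hEq.deriv_eq
    rw [hL.deriv, hR.deriv] at h
    exact h
  -- Step B' : value at 0
  have hΥ'0 : deriv Υ 0 = deriv ω 0 / 2 := by
    have h := key1 0 hU0
    have he0 : ω 0 - Υ 0 = 0 := by rw [hΥω]; ring
    rw [he0] at h
    simp only [mul_zero, Real.exp_zero, zero_mul, zero_add, add_zero, one_mul, mul_one, ne_eq,
      OfNat.ofNat_ne_zero, not_false_eq_true, zero_pow] at h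
    linarith
  -- Step C : second derivative at 0
  have hΥ''0 : deriv (deriv Υ) 0
      = deriv (deriv ω) 0 / 3 + (deriv ω 0) ^ 2 / 12 - Q 0 / 3 := by
    -- differentiate key1 at 0
    have t1 : HasDerivAt (fun r => 2 * deriv Υ r) (2 * deriv (deriv Υ) 0) 0 :=
      (hdΥ' 0 hU0).const_mul 2
    have t2 : HasDerivAt (fun r => 2 * deriv (deriv Υ) r * r)
        (2 * deriv (deriv (deriv Υ)) 0 * 0 + 2 * deriv (deriv Υ) 0 * 1) 0 := by
      have := ((hdΥ'' 0 hU0).const_mul 2).fun_mul (hasDerivAt_id 0)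
      simpa using this
    have t3 : HasDerivAt (fun r => 2 * deriv Υ r * 1)
        (2 * deriv (deriv Υ) 0 * 1 + 2 * deriv Υ 0 * 0) 0 :=
      ((hdΥ' 0 hU0).const_mul 2).mul (hasDerivAt_const 0 1)
    have t4 : HasDerivAt (fun r : ℝ => (2 * r) * ((deriv Υ r) ^ 2 + Q r))
        (2 * ((deriv Υ 0) ^ 2 + Q 0)
          + (2 * 0) * (2 * deriv Υ 0 ^ 1 * deriv (deriv Υ) 0 + deriv Q 0)) 0 := by
      have h2 : HasDerivAt (fun r : ℝ => 2 * r) 2 0 := by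
        simpa using (hasDerivAt_id (0:ℝ)).const_mul 2
      exact h2.mul (((hdΥ' 0 hU0).pow 2).add (hdQ 0 hU0))
    have t5 : HasDerivAt
        (fun r : ℝ => r ^ 2 * (2 * deriv Υ r ^ 1 * deriv (deriv Υ) r + deriv Q r)) 0 0 := by
      apply sq_mul_hasDerivAt
      have c1 : ContinuousAt (deriv Υ) 0 := (hΥ1.contDiffAt hUnhds).continuousAt
      have c2 : ContinuousAt (deriv (deriv Υ)) 0 := (hΥ2.contDiffAt hUnhds).continuousAt
      have c3 : ContinuousAt (deriv Q) 0 :=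
        (hQ.continuousOn_deriv_of_isOpen hUo le_rfl).continuousAt hUnhds
      exact (((c1.pow 1).const_mul 2 |>.mul c2).add c3)
    have hL1 := ((t1.fun_add (t2.fun_add t3)).fun_sub t1).fun_add (t4.fun_add t5)
    have hR1 : HasDerivAt (fun r => Real.exp (2 * (ω r - Υ r)) * (2 * (deriv ω r - deriv Υ r)))
        (Real.exp (2 * (ω 0 - Υ 0)) * (2 * (deriv ω 0 - deriv Υ 0))
            * (2 * (deriv ω 0 - deriv Υ 0))
          + Real.exp (2 * (ω 0 - Υ 0)) * (2 * (deriv (deriv ω) 0 - deriv (deriv Υ) 0))) 0 := by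
      have hin : HasDerivAt (fun r => 2 * (ω r - Υ r)) (2 * (deriv ω 0 - deriv Υ 0)) 0 :=
        ((hdω 0 hU0).sub (hdΥ 0 hU0)).const_mul 2
      have hexp : HasDerivAt (fun r => Real.exp (2 * (ω r - Υ r)))
          (Real.exp (2 * (ω 0 - Υ 0)) * (2 * (deriv ω 0 - deriv Υ 0))) 0 :=
        (Real.hasDerivAt_exp _).comp 0 hin
      have hlin : HasDerivAt (fun r => 2 * (deriv ω r - deriv Υ r))
          (2 * (deriv (deriv ω) 0 - deriv (deriv Υ) 0)) 0 :=
        ((hdω' 0 hU0).sub (hdΥ' 0 hU0)).const_mul 2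
      exact hexp.mul hlin
    have hEq1 : (fun r =>
        2 * deriv Υ r + (2 * deriv (deriv Υ) r * r + 2 * deriv Υ r * 1) - 2 * deriv Υ r
          + ((2 * r) * ((deriv Υ r) ^ 2 + Q r)
            + r ^ 2 * (2 * deriv Υ r ^ 1 * deriv (deriv Υ) r + deriv Q r)))
        =ᶠ[𝓝 (0:ℝ)]
        (fun r => Real.exp (2 * (ω r - Υ r)) * (2 * (deriv ω r - deriv Υ r))) :=
      eventually_of_mem hUnhds (fun x hx => key1 x hx)
    have h := hEq1.deriv_eq
    rw [hL1.deriv, hR1.deriv] at h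
    have he0 : ω 0 - Υ 0 = 0 := by rw [hΥω]; ring
    rw [he0, hΥ'0] at h
    simp only [Real.exp_zero, one_mul, mul_zero, zero_mul, add_zero, mul_one] at h
    linear_combination h / 6
  -- Step D : f facts
  have hΥat : ContDiffAt ℝ 3 Υ 0 := hΥ.contDiffAt hUnhds
  have hfC : ContDiffAt ℝ 3 f 0 := by
    rw [hf]
    exact ((Real.contDiff_exp.contDiffAt).comp 0 hΥat).mul contDiffAt_id
  have hf0 : f 0 = 0 := by rw [hf]; simp
  have hfd0 : HasDerivAt f (Real.exp (Υ 0)) 0 := by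
    rw [hf]
    have h1 : HasDerivAt (fun r => Real.exp (Υ r)) (Real.exp (Υ 0) * deriv Υ 0) 0 :=
      (Real.hasDerivAt_exp _).comp 0 (hdΥ 0 hU0)
    have := h1.fun_mul (hasDerivAt_id 0)
    simpa using this
  -- Step E : g is C³ at 0
  have hgC : ContDiffAt ℝ 3 g 0 := by
    have hc : Real.exp (Υ 0) ≠ 0 := Real.exp_ne_zero _
    set e : ℝ ≃L[ℝ] ℝ := ContinuousLinearEquiv.unitsEquivAut ℝ (Units.mk0 _ hc) with he
    have hfd' : HasFDerivAt f (e : ℝ →L[ℝ] ℝ) 0 := by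
      refine hfd0.hasFDerivAt.congr_fderiv ?_
      ext
      simp [he, ContinuousLinearEquiv.unitsEquivAut, mul_comm]
    have hn : (3 : WithTop ℕ∞) ≠ 0 := by norm_num
    have hlC : ContDiffAt ℝ 3 (hfC.localInverse hfd' hn) (f 0) := hfC.to_localInverse hfd' hn
    have hstrict := hfC.hasStrictFDerivAt' hfd' hn
    have hgev : ∀ᶠ r in 𝓝 (0:ℝ), g (f r) = r :=
      eventually_of_mem (hVo.mem_nhds hV0) (fun x hx => hgf x hx)
    have huniq : ∀ᶠ y in 𝓝 (f 0), g y = hfC.localInverse hfd' hn y :=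
      hstrict.localInverse_unique hgev
    rw [hf0] at hlC huniq
    exact hlC.congr_of_eventuallyEq huniq
  -- Step F : build the neighborhood W
  obtain ⟨W₁, hW₁, hgW₁⟩ := hgC.contDiffOn le_rfl (by simp)
  have hgU : g ⁻¹' U ∈ 𝓝 (0:ℝ) := by
    apply hgC.continuousAt.preimage_mem_nhds
    rw [hg0]; exact hUnhds
  obtain ⟨W, hWsub, hWo, hW0⟩ :=
    mem_nhds_iff.1 (inter_mem (inter_mem hW₁ hgU) (hVo.mem_nhds hV0))
  have hWV : ∀ s ∈ W, s ∈ V := fun s hs => (hWsub hs).2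
  have hWU : ∀ s ∈ W, g s ∈ U := fun s hs => (hWsub hs).1.2
  have hgW : ContDiffOn ℝ 3 g W := hgW₁.mono (fun s hs => (hWsub hs).1.1)
  -- Step G : b = B on W where B s = exp (-Υ (g s))
  set B : ℝ → ℝ := fun s => Real.exp (-Υ (g s)) with hBdef
  have hBC : ContDiffOn ℝ 2 B W := by
    have h1 : ContDiffOn ℝ 3 (fun s => -Υ (g s)) W := by
      have := (hΥ.neg).comp hgW (fun s hs => hWU s hs)
      exact this
    exact (Real.contDiff_exp.comp_contDiffOn h1).of_le (by norm_num)
  have hbB : Set.EqOn b B W := by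
    intro s hs
    rw [hb]
    by_cases h : s = 0
    · subst h
      simp [hBdef, hg0]
    · simp only [if_neg h]
      have h1 : Real.exp (Υ (g s)) * g s = s := by
        have := hfg s (hWV s hs); rwa [hf] at this
      have h2 : g s = Real.exp (-Υ (g s)) * s := by
        rw [Real.exp_neg]
        field_simp
        linear_combination h1
      rw [h2, mul_div_assoc, div_self h, mul_one]
  have hbC : ContDiffOn ℝ 2 b W := hBC.congr hbB
  -- derivative of g on W
  have hderivg : ∀ s ∈ W, HasDerivAt g
      ((Real.exp (Υ (g s)) * (deriv Υ (g s) * g s + 1))⁻¹) s := by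
    intro s hs
    have hgs : HasDerivAt g (deriv g s) s :=
      (((hgW.contDiffAt (hWo.mem_nhds hs)).differentiableAt (by norm_num)).hasDerivAt)
    have hΥgs : HasDerivAt Υ (deriv Υ (g s)) (g s) := hdΥ (g s) (hWU s hs)
    have hfgs : HasDerivAt f (Real.exp (Υ (g s)) * (deriv Υ (g s) * g s + 1)) (g s) := by
      rw [hf]
      have h1 : HasDerivAt (fun r => Real.exp (Υ r)) (Real.exp (Υ (g s)) * deriv Υ (g s))
          (g s) := (Real.hasDerivAt_exp _).comp _ hΥgs
      have := h1.fun_mul (hasDerivAt_id (g s))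
      simpa using this.congr_deriv (by simp; ring)
    have hcomp : HasDerivAt (f ∘ g)
        (Real.exp (Υ (g s)) * (deriv Υ (g s) * g s + 1) * deriv g s) s := hfgs.comp s hgs
    have hid : HasDerivAt (f ∘ g) 1 s := by
      have hev : (id : ℝ → ℝ) =ᶠ[𝓝 s] f ∘ g :=
        eventually_of_mem (hVo.mem_nhds (hWV s hs)) (fun x hx => (hfg x hx).symm)
      exact (hasDerivAt_id s).congr_of_eventuallyEq hev.symm |>.congr_deriv rfl
    have h1 : Real.exp (Υ (g s)) * (deriv Υ (g s) * g s + 1) * deriv g s = 1 :=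
      hcomp.unique hid
    have := (inv_eq_of_mul_eq_one_right h1).symm
    rwa [this] at hgs
  -- derivative of B on W
  have hdB : ∀ s ∈ W, HasDerivAt B
      (Real.exp (-Υ (g s)) *
        -(deriv Υ (g s) * (Real.exp (Υ (g s)) * (deriv Υ (g s) * g s + 1))⁻¹)) s := by
    intro s hs
    have h1 : HasDerivAt (fun s => -Υ (g s))
        (-(deriv Υ (g s) * (Real.exp (Υ (g s)) * (deriv Υ (g s) * g s + 1))⁻¹)) s :=
      ((hdΥ (g s) (hWU s hs)).comp s (hderivg s hs)).neg
    exact (Real.hasDerivAt_exp _).comp s h1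
  -- Φ : the function such that deriv B = Φ ∘ g on W
  set Φ : ℝ → ℝ := fun r => Real.exp (-Υ r) *
      -(deriv Υ r * (Real.exp (Υ r) * (deriv Υ r * r + 1))⁻¹) with hΦdef
  have hdBΦ : Set.EqOn (deriv B) (fun s => Φ (g s)) W := by
    intro s hs
    rw [(hdB s hs).deriv]
  -- eventual equalities at 0
  have hWnhds : W ∈ 𝓝 (0:ℝ) := hWo.mem_nhds hW0
  have hbBev : b =ᶠ[𝓝 0] B := eventually_of_mem hWnhds hbB
  -- value at 0
  have hb0 : b 0 = Real.exp (-ω 0) := by rw [hb]; simp [hΥω]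
  -- first derivative at 0
  have hder1 : deriv b 0 = -(1 / 2) * deriv ω 0 * Real.exp (-2 * ω 0) := by
    rw [hbBev.deriv_eq, (hdB 0 hW0).deriv, hg0, hΥω, hΥ'0]
    have e1 : Real.exp (-2 * ω 0) = (Real.exp (ω 0))⁻¹ * (Real.exp (ω 0))⁻¹ := by
      rw [← Real.exp_neg, ← Real.exp_add]; ring_nf
    rw [Real.exp_neg, e1]
    ring
  -- second derivative at 0
  have hder2fun : deriv b =ᶠ[𝓝 0] (fun s => Φ (g s)) :=
    (hbBev.deriv).trans (eventually_of_mem hWnhds hdBΦ)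
  have hg'0 : HasDerivAt g ((Real.exp (Υ 0) * (deriv Υ 0 * 0 + 1))⁻¹) 0 := by
    have := hderivg 0 hW0
    rwa [hg0] at this
  have hΦd : HasDerivAt Φ
      ((Real.exp (-Υ 0) * -(deriv Υ 0)) *
          -(deriv Υ 0 * (Real.exp (Υ 0) * (deriv Υ 0 * 0 + 1))⁻¹)
        + Real.exp (-Υ 0) *
          -(deriv (deriv Υ) 0 * (Real.exp (Υ 0) * (deriv Υ 0 * 0 + 1))⁻¹
            + deriv Υ 0 *
              (-(Real.exp (Υ 0) * deriv Υ 0 * (deriv Υ 0 * 0 + 1)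
                  + Real.exp (Υ 0) * (deriv (deriv Υ) 0 * 0 + deriv Υ 0 * 1))
                / (Real.exp (Υ 0) * (deriv Υ 0 * 0 + 1)) ^ 2))) 0 := by
    have hA : HasDerivAt (fun r => Real.exp (-Υ r)) (Real.exp (-Υ 0) * -(deriv Υ 0)) 0 :=
      (Real.hasDerivAt_exp _).comp 0 (hdΥ 0 hU0).neg
    have hexpΥ : HasDerivAt (fun r => Real.exp (Υ r)) (Real.exp (Υ 0) * deriv Υ 0) 0 :=
      (Real.hasDerivAt_exp _).comp 0 (hdΥ 0 hU0)
    have hlin : HasDerivAt (fun r => deriv Υ r * r + 1)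
        (deriv (deriv Υ) 0 * 0 + deriv Υ 0 * 1) 0 :=
      ((hdΥ' 0 hU0).mul (hasDerivAt_id 0)).add_const 1
    have hDen : HasDerivAt (fun r => Real.exp (Υ r) * (deriv Υ r * r + 1))
        (Real.exp (Υ 0) * deriv Υ 0 * (deriv Υ 0 * 0 + 1)
          + Real.exp (Υ 0) * (deriv (deriv Υ) 0 * 0 + deriv Υ 0 * 1)) 0 :=
      hexpΥ.mul hlin
    have hne : Real.exp (Υ 0) * (deriv Υ 0 * 0 + 1) ≠ 0 := by
      simp [Real.exp_ne_zero]
    have hInv := hDen.inv hne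
    have hN : HasDerivAt (fun r => deriv Υ r *
        (Real.exp (Υ r) * (deriv Υ r * r + 1))⁻¹)
        (deriv (deriv Υ) 0 * (Real.exp (Υ 0) * (deriv Υ 0 * 0 + 1))⁻¹
          + deriv Υ 0 *
            (-(Real.exp (Υ 0) * deriv Υ 0 * (deriv Υ 0 * 0 + 1)
                + Real.exp (Υ 0) * (deriv (deriv Υ) 0 * 0 + deriv Υ 0 * 1))
              / (Real.exp (Υ 0) * (deriv Υ 0 * 0 + 1)) ^ 2)) 0 :=
      (hdΥ' 0 hU0).mul hInv
    exact hA.mul hN.neg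
  set Dval : ℝ := (Real.exp (-Υ 0) * -(deriv Υ 0)) *
          -(deriv Υ 0 * (Real.exp (Υ 0) * (deriv Υ 0 * 0 + 1))⁻¹)
        + Real.exp (-Υ 0) *
          -(deriv (deriv Υ) 0 * (Real.exp (Υ 0) * (deriv Υ 0 * 0 + 1))⁻¹
            + deriv Υ 0 *
              (-(Real.exp (Υ 0) * deriv Υ 0 * (deriv Υ 0 * 0 + 1)
                  + Real.exp (Υ 0) * (deriv (deriv Υ) 0 * 0 + deriv Υ 0 * 1))
                / (Real.exp (Υ 0) * (deriv Υ 0 * 0 + 1)) ^ 2)) with hDval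
  have hΦdg : HasDerivAt Φ Dval (g 0) := by rw [hg0]; exact hΦd
  have hΦg : HasDerivAt (fun s => Φ (g s))
      (Dval * (Real.exp (Υ 0) * (deriv Υ 0 * 0 + 1))⁻¹) 0 :=
    HasDerivAt.comp 0 hΦdg hg'0
  have hder2 : deriv (deriv b) 0
      = ((2 / 3) * (deriv ω 0) ^ 2 + (1 / 3) * Q 0 - (1 / 3) * deriv (deriv ω) 0)
          * Real.exp (-3 * ω 0) := by
    rw [hder2fun.deriv_eq, hΦg.deriv, hDval]
    rw [hΥω, hΥ'0, hΥ''0]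
    have e1 : Real.exp (-ω 0) = (Real.exp (ω 0))⁻¹ := Real.exp_neg _
    have e3 : Real.exp (-3 * ω 0) = (Real.exp (ω 0))⁻¹ * ((Real.exp (ω 0))⁻¹ * (Real.exp (ω 0))⁻¹) := by
      rw [show (-3:ℝ) * ω 0 = -ω 0 + (-ω 0 + -ω 0) by ring, Real.exp_add, Real.exp_add,
        Real.exp_neg]
    rw [e1, e3]
    have hE : Real.exp (ω 0) ≠ 0 := Real.exp_ne_zero _
    field_simp
    ring
  exact ⟨W, hWo, hW0, hbC, hb0, hder1, hder2⟩
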